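/- Let V be a finite-dimensional real vector space, U : V^3 → ℝ trilinear and w : V → ℝ linear. If ξ_{−1}·U = U, then for all a,b,c,d ∈ V: (1/12)·(y_t*(U⊗w))(a,b,c,d) = (1/4)·(U(b,c,d)w(a) − U(a,c,d)w(b) − U(d,b,a)w(c) + U(c,b,a)w(d)). If ξ_2·U = U, then for all a,b,c,d ∈ V: (1/12)·(y_t*(U⊗w))(a,b,c,d) = (1/4)·(U(d,c,b)w(a) − U(d,c,a)w(b) − U(a,b,d)w(c) + U(a,b,c)w(d)). -/

import Mathlib

/-- Action of a group ring element `a ∈ ℝ[S_r]` on an `r`-multilinear map: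
`(aT)(v₁,…,v_r) = Σ_p a(p)·T(v_{p(1)},…,v_{p(r)})`. -/
noncomputable def gact {V : Type} [AddCommGroup V] [Module ℝ V] {r : ℕ}
    (a : MonoidAlgebra ℝ (Equiv.Perm (Fin r)))
    (T : MultilinearMap ℝ (fun _ : Fin r => V) ℝ) :
    MultilinearMap ℝ (fun _ : Fin r => V) ℝ :=
  ∑ p : Equiv.Perm (Fin r), a.coeff p • T.domDomCongr p
/-- Pointwise action of a group ring element `a ∈ ℝ[S_r]` on a function
`T : V^r → ℝ`: `(aT)(v₁,…,v_r) = Σ_p a(p)·T(v_{p(1)},…,v_{p(r)})`. -/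
noncomputable def fact {V : Type} [AddCommGroup V] [Module ℝ V] {r : ℕ}
    (a : MonoidAlgebra ℝ (Equiv.Perm (Fin r)))
    (T : (Fin r → V) → ℝ) : (Fin r → V) → ℝ :=
  fun v => ∑ p : Equiv.Perm (Fin r), a.coeff p * T (fun i => v (p i))
/-- The star map `a* := Σ_p a(p)·p⁻¹` on the group ring `ℝ[S_r]`. -/
noncomputable def astar {r : ℕ} (a : MonoidAlgebra ℝ (Equiv.Perm (Fin r))) :
    MonoidAlgebra ℝ (Equiv.Perm (Fin r)) :=
  MonoidAlgebra.ofCoeff (Finsupp.equivFunOnFinite.symm (fun p => a.coeff p⁻¹))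
/-- The Young symmetrizer `y_t = Σ_{p∈H_t} Σ_{q∈V_t} sign(q)·(p∘q)` of the tableau with
rows `{1,3}`, `{2,4}` (indices `0`-based in `Fin 4`):
`H_t = {id, (1 3), (2 4), (1 3)(2 4)}`, `V_t = {id, (1 2), (3 4), (1 2)(3 4)}`. -/
noncomputable def yt : MonoidAlgebra ℝ (Equiv.Perm (Fin 4)) :=
  (MonoidAlgebra.single 1 1 + MonoidAlgebra.single (Equiv.swap 0 2) 1 +
     MonoidAlgebra.single (Equiv.swap 1 3) 1 +
     MonoidAlgebra.single (Equiv.swap 0 2 * Equiv.swap 1 3) 1) *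
  (MonoidAlgebra.single 1 1 - MonoidAlgebra.single (Equiv.swap 0 1) 1 -
     MonoidAlgebra.single (Equiv.swap 2 3) 1 +
     MonoidAlgebra.single (Equiv.swap 0 1 * Equiv.swap 2 3) 1)
/-- `ξ_ν := (1/3)(id + ν·(2 3) + (1−ν)·(1 2) − ν·(1 2 3) + (ν−1)·(1 3 2) − (1 3)) ∈ ℝ[S_3]`,
with `0`-based indices in `Fin 3`; `finRotate 3` is the cycle `(1 2 3)`. -/
noncomputable def xi (ν : ℝ) : MonoidAlgebra ℝ (Equiv.Perm (Fin 3)) :=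
  (1/3 : ℝ) • (MonoidAlgebra.single 1 1 + MonoidAlgebra.single (Equiv.swap 1 2) ν +
    MonoidAlgebra.single (Equiv.swap 0 1) (1 - ν) - MonoidAlgebra.single (finRotate 3) ν +
    MonoidAlgebra.single (finRotate 3)⁻¹ (ν - 1) - MonoidAlgebra.single (Equiv.swap 0 2) 1)

section Aux

lemma ma_add_apply {r : ℕ} (a b : MonoidAlgebra ℝ (Equiv.Perm (Fin r))) (p : Equiv.Perm (Fin r)) :
    (a + b).coeff p = a.coeff p + b.coeff p := rfl
lemma ma_sub_apply {r : ℕ} (a b : MonoidAlgebra ℝ (Equiv.Perm (Fin r))) (p : Equiv.Perm (Fin r)) :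
    (a - b).coeff p = a.coeff p - b.coeff p := rfl
lemma ma_smul_apply {r : ℕ} (s : ℝ) (a : MonoidAlgebra ℝ (Equiv.Perm (Fin r))) (p : Equiv.Perm (Fin r)) :
    (s • a).coeff p = s * a.coeff p := rfl

variable {V : Type} [AddCommGroup V] [Module ℝ V] {r : ℕ}

lemma fact_add (a b : MonoidAlgebra ℝ (Equiv.Perm (Fin r))) (T : (Fin r → V) → ℝ) (v : Fin r → V) :
    fact (a + b) T v = fact a T v + fact b T v := by
  simp [fact, ma_add_apply, add_mul, Finset.sum_add_distrib]

lemma fact_sub (a b : MonoidAlgebra ℝ (Equiv.Perm (Fin r))) (T : (Fin r → V) → ℝ) (v : Fin r → V) :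
    fact (a - b) T v = fact a T v - fact b T v := by
  simp [fact, ma_sub_apply, sub_mul, Finset.sum_sub_distrib]

lemma fact_single (g : Equiv.Perm (Fin r)) (c : ℝ) (T : (Fin r → V) → ℝ) (v : Fin r → V) :
    fact (MonoidAlgebra.single g c) T v = c * T (fun i => v (g i)) := by
  simp [fact, MonoidAlgebra.coeff_single, Finsupp.single_apply]

lemma astar_single (g : Equiv.Perm (Fin r)) (c : ℝ) :
    astar (MonoidAlgebra.single g c) = MonoidAlgebra.single g⁻¹ c := by
  ext p
  have h : p = g⁻¹ ↔ g = p⁻¹ := by constructor <;> (rintro rfl; simp)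
  simp [astar, MonoidAlgebra.coeff_single, Finsupp.single_apply, h, eq_comm]

lemma astar_add (a b : MonoidAlgebra ℝ (Equiv.Perm (Fin r))) :
    astar (a + b) = astar a + astar b := by
  ext p; simp [astar, ma_add_apply]

lemma astar_sub (a b : MonoidAlgebra ℝ (Equiv.Perm (Fin r))) :
    astar (a - b) = astar a - astar b := by
  ext p; simp [astar, ma_sub_apply]

lemma gact_add (a b : MonoidAlgebra ℝ (Equiv.Perm (Fin r))) (T : MultilinearMap ℝ (fun _ : Fin r => V) ℝ) :
    gact (a + b) T = gact a T + gact b T := by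
  simp [gact, ma_add_apply, add_smul, Finset.sum_add_distrib]

lemma gact_sub (a b : MonoidAlgebra ℝ (Equiv.Perm (Fin r))) (T : MultilinearMap ℝ (fun _ : Fin r => V) ℝ) :
    gact (a - b) T = gact a T - gact b T := by
  simp [gact, ma_sub_apply, sub_smul, Finset.sum_sub_distrib]
  rw [← Finset.sum_sub_distrib]
  exact Finset.sum_congr rfl (fun p _ => by ext v; simp [sub_mul])

lemma gact_smul (s : ℝ) (a : MonoidAlgebra ℝ (Equiv.Perm (Fin r))) (T : MultilinearMap ℝ (fun _ : Fin r => V) ℝ) :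
    gact (s • a) T = s • gact a T := by
  simp [gact, ma_smul_apply, Finset.smul_sum, smul_smul]

lemma gact_single (g : Equiv.Perm (Fin r)) (c : ℝ) (T : MultilinearMap ℝ (fun _ : Fin r => V) ℝ) :
    gact (MonoidAlgebra.single g c) T = c • T.domDomCongr g := by
  simp [gact, MonoidAlgebra.coeff_single, Finsupp.single_apply]

set_option linter.unusedSectionVars false in
lemma Tv4 (T : (Fin 4 → V) → ℝ) (g : Equiv.Perm (Fin 4)) (v : Fin 4 → V) :
    T (fun i => v (g i)) = T ![v (g 0), v (g 1), v (g 2), v (g 3)] := by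
  congr 1; funext i; fin_cases i <;> rfl

lemma hxi_of (U : MultilinearMap ℝ (fun _ : Fin 3 => V) ℝ) (ν : ℝ) (h : gact (xi ν) U = U)
    (x y z : V) : (1/3 : ℝ) * (U ![x,y,z] + ν * U ![x,z,y] + (1-ν) * U ![y,x,z]
      - ν * U ![y,z,x] + (ν-1) * U ![z,x,y] - U ![z,y,x]) = U ![x,y,z] := by
  rw [xi] at h
  rw [gact_smul, gact_sub, gact_add, gact_sub, gact_add, gact_add] at h
  simp only [gact_single] at h
  have h' := DFunLike.congr_fun h ![x,y,z]
  simp only [MultilinearMap.smul_apply, MultilinearMap.add_apply, MultilinearMap.sub_apply,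
    MultilinearMap.domDomCongr_apply, smul_eq_mul] at h'
  have e1 : (fun i => (![x,y,z] : Fin 3 → V) ((1 : Equiv.Perm (Fin 3)) i)) = ![x,y,z] := by
    funext i; fin_cases i <;> rfl
  have e2 : (fun i => (![x,y,z] : Fin 3 → V) ((Equiv.swap 1 2) i)) = ![x,z,y] := by
    funext i; fin_cases i <;> rfl
  have e3 : (fun i => (![x,y,z] : Fin 3 → V) ((Equiv.swap 0 1) i)) = ![y,x,z] := by
    funext i; fin_cases i <;> rfl
  have e4 : (fun i => (![x,y,z] : Fin 3 → V) ((finRotate 3) i)) = ![y,z,x] := by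
    funext i; fin_cases i <;> rfl
  have e5 : (fun i => (![x,y,z] : Fin 3 → V) ((finRotate 3)⁻¹ i)) = ![z,x,y] := by
    funext i; fin_cases i <;> rfl
  have e6 : (fun i => (![x,y,z] : Fin 3 → V) ((Equiv.swap 0 2) i)) = ![z,y,x] := by
    funext i; fin_cases i <;> rfl
  rw [e1, e2, e3, e4, e5, e6] at h'
  linarith [h']

lemma fact_yt' (T : (Fin 4 → V) → ℝ) (a b c d : V) :
    fact (astar yt) T ![a, b, c, d] =
      T ![a,b,c,d] + T ![c,b,a,d] + T ![a,d,c,b] + T ![c,d,a,b] -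
        (T ![b,a,c,d] + T ![c,a,b,d] + T ![b,d,c,a] + T ![c,d,b,a]) -
        (T ![a,b,d,c] + T ![d,b,a,c] + T ![a,c,d,b] + T ![d,c,a,b]) +
        (T ![b,a,d,c] + T ![d,a,b,c] + T ![b,c,d,a] + T ![d,c,b,a]) := by
  rw [yt]
  simp only [mul_add, add_mul, mul_sub, sub_mul, MonoidAlgebra.single_mul_single,
    one_mul, mul_one, astar_add, astar_sub, astar_single, mul_inv_rev, Equiv.swap_inv, inv_one,
    fact_add, fact_sub, fact_single]
  simp only [Tv4]
  simp (config := { decide := true }) only [Equiv.Perm.mul_apply, Equiv.Perm.one_apply,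
    Equiv.swap_apply_def, Matrix.cons_val_zero, Matrix.cons_val_one, Matrix.head_cons,
    Matrix.cons_val_two, Matrix.tail_cons, Matrix.cons_val_three, if_true, if_false]

lemma fact_yt (U : MultilinearMap ℝ (fun _ : Fin 3 => V) ℝ) (w : V →ₗ[ℝ] ℝ) (a b c d : V) :
    fact (astar yt) (fun v' => U ![v' 0, v' 1, v' 2] * w (v' 3)) ![a, b, c, d] =
      U ![a,b,c] * w d + U ![c,b,a] * w d + U ![a,d,c] * w b + U ![c,d,a] * w b -
        (U ![b,a,c] * w d + U ![c,a,b] * w d + U ![b,d,c] * w a + U ![c,d,b] * w a) -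
        (U ![a,b,d] * w c + U ![d,b,a] * w c + U ![a,c,d] * w b + U ![d,c,a] * w b) +
        (U ![b,a,d] * w c + U ![d,a,b] * w c + U ![b,c,d] * w a + U ![d,c,b] * w a) := by
  rw [fact_yt']
  simp only [Matrix.cons_val_zero, Matrix.cons_val_one, Matrix.head_cons,
    Matrix.cons_val_two, Matrix.tail_cons, Matrix.cons_val_three]

end Aux

/-- For trilinear `U` and linear `w`: if `ξ_{−1}·U = U` then
`(1/12)·(y_t*(U⊗w))(a,b,c,d)
  = (1/4)(U(b,c,d)w(a) − U(a,c,d)w(b) − U(d,b,a)w(c) + U(c,b,a)w(d))`;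
if `ξ_2·U = U` then `(1/12)·(y_t*(U⊗w))(a,b,c,d)
  = (1/4)(U(d,c,b)w(a) − U(d,c,a)w(b) − U(a,b,d)w(c) + U(a,b,c)w(d))`. -/
theorem stmt_18 (V : Type) [AddCommGroup V] [Module ℝ V] [FiniteDimensional ℝ V]
    (U : MultilinearMap ℝ (fun _ : Fin 3 => V) ℝ) (w : V →ₗ[ℝ] ℝ) :
    (gact (xi (-1)) U = U →
      ∀ a b c d : V,
        (1/12 : ℝ) *
            fact (astar yt) (fun v' => U ![v' 0, v' 1, v' 2] * w (v' 3)) ![a, b, c, d] =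
          (1/4 : ℝ) * (U ![b, c, d] * w a - U ![a, c, d] * w b -
            U ![d, b, a] * w c + U ![c, b, a] * w d)) ∧
    (gact (xi 2) U = U →
      ∀ a b c d : V,
        (1/12 : ℝ) *
            fact (astar yt) (fun v' => U ![v' 0, v' 1, v' 2] * w (v' 3)) ![a, b, c, d] =
          (1/4 : ℝ) * (U ![d, c, b] * w a - U ![d, c, a] * w b -
            U ![a, b, d] * w c + U ![a, b, c] * w d)) := by
  constructor
  · intro h a b c d
    have H := hxi_of U (-1) h
    rw [fact_yt]
    linear_combination (1/12 : ℝ) * w a * H b c d + (1/6 : ℝ) * w a * H c d b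
      - (1/12 : ℝ) * w b * H a c d - (1/6 : ℝ) * w b * H c d a
      - (1/12 : ℝ) * w c * H a b d - (1/12 : ℝ) * w c * H a d b
      - (1/6 : ℝ) * w c * H b a d + (1/12 : ℝ) * w c * H b d a
      + (1/12 : ℝ) * w d * H a b c + (1/12 : ℝ) * w d * H a c b
      + (1/6 : ℝ) * w d * H b a c - (1/12 : ℝ) * w d * H b c a
  · intro h a b c d
    have H := hxi_of U 2 h
    rw [fact_yt]
    linear_combination (1/12 : ℝ) * w a * H b c d + (1/4 : ℝ) * w a * H b d c
      - (1/12 : ℝ) * w a * H c d b - (1/12 : ℝ) * w b * H a c d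
      - (1/4 : ℝ) * w b * H a d c + (1/12 : ℝ) * w b * H c d a
      - (1/12 : ℝ) * w c * H a b d + (1/6 : ℝ) * w c * H a d b
      - (1/6 : ℝ) * w c * H b a d - (1/6 : ℝ) * w c * H b d a
      + (1/12 : ℝ) * w d * H a b c - (1/6 : ℝ) * w d * H a c b
      + (1/6 : ℝ) * w d * H b a c + (1/6 : ℝ) * w d * H b c a
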